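/- Let (y_n, z_n), for n ≥ 1, be the orbit of the reduced local structure map F for rule 14 started at (y_1, z_1) = (3/8, 7/32). Then (y_n, z_n) converges to (1/4, 0) as n → ∞. -/
import Mathlib


open Filter

/-- Reduced two-dimensional local structure map for rule 14.  In Lean,
division by zero yields zero, matching the convention that the fraction
`(4y-1)(y-z)z/y` is taken to be `0` whenever `y = 0`. -/
noncomputable def F (p : ℝ × ℝ) : ℝ × ℝ :=
  (1/2 - p.1 + p.2, p.2 - (4 * p.1 - 1) * (p.1 - p.2) * p.2 / p.1)

/-- Invariant region for the orbit. -/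
def FInv (p : ℝ × ℝ) : Prop :=
  1/4 < p.1 ∧ p.1 < p.2 + 1/4 ∧ 0 < p.2 ∧ p.2 ≤ 7/32

lemma FInv_step {p : ℝ × ℝ} (h : FInv p) :
    FInv (F p) ∧ (F p).2 ≤ p.2 - (4 * p.1 - 1) * p.2 / 16 := by
  obtain ⟨h1, h2, h3, h4⟩ := h
  set y := p.1 with hy
  set z := p.2 with hz
  have hy0 : (0:ℝ) < y := by linarith
  have hyz1 : (0:ℝ) < y - z := by linarith
  have hyz2 : y - z < 1/4 := by linarith
  have e1 : 4 * (y - z) * z < y := by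
    nlinarith [mul_pos h3 (show (0:ℝ) < 1/4 - (y - z) by linarith)]
  have hA : (4 * y - 1) * (y - z) * z / y < y - 1/4 := by
    rw [div_lt_iff₀ hy0]
    nlinarith [mul_lt_mul_of_pos_left e1 (show (0:ℝ) < y - 1/4 by linarith)]
  have hApos : 0 ≤ (4 * y - 1) * (y - z) * z / y := by
    apply div_nonneg _ hy0.le
    exact mul_nonneg (mul_nonneg (by linarith) hyz1.le) h3.le
  have hAz : (4 * y - 1) * (y - z) * z / y < z := by
    rw [div_lt_iff₀ hy0]
    have e2 : (4 * y - 1) * (y - z) < y := by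
      nlinarith [mul_pos (show (0:ℝ) < 4 * z - (4 * y - 1) by linarith) hyz1,
        mul_pos h3 (show (0:ℝ) < 1/4 - (y - z) by linarith)]
    nlinarith [mul_lt_mul_of_pos_right e2 h3]
  have hlb : (4 * y - 1) * z / 16 ≤ (4 * y - 1) * (y - z) * z / y := by
    rw [div_le_div_iff₀ (by norm_num) hy0]
    have e3 : y ≤ 16 * (y - z) := by linarith
    nlinarith [mul_le_mul_of_nonneg_left e3
      (mul_nonneg (show (0:ℝ) ≤ 4 * y - 1 by linarith) h3.le)]
  refine ⟨⟨?_, ?_, ?_, ?_⟩, ?_⟩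
  · show 1/4 < 1/2 - y + z
    linarith
  · show 1/2 - y + z < (z - (4 * y - 1) * (y - z) * z / y) + 1/4
    linarith
  · show 0 < z - (4 * y - 1) * (y - z) * z / y
    linarith
  · show z - (4 * y - 1) * (y - z) * z / y ≤ 7/32
    linarith
  · show z - (4 * y - 1) * (y - z) * z / y ≤ z - (4 * y - 1) * z / 16
    linarith

/-- The orbit of the reduced local structure map started at
`(y₁, z₁) = (3/8, 7/32)` converges to `(1/4, 0)`. -/
theorem reduced_local_structure_orbit_converges :
    Tendsto (fun n : ℕ => F^[n] (3/8, 7/32)) atTop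
      (nhds ((1/4 : ℝ), (0 : ℝ))) := by
  set o : ℕ → ℝ × ℝ := fun n => F^[n] (3/8, 7/32) with ho
  set Y : ℕ → ℝ := fun n => (o n).1 with hY
  set Z : ℕ → ℝ := fun n => (o n).2 with hZ
  have hsucc : ∀ n, o (n + 1) = F (o n) := fun n =>
    Function.iterate_succ_apply' F n _
  have hinv : ∀ n, FInv (o n) := by
    intro n
    induction n with
    | zero =>
      show FInv (3/8, 7/32)
      exact ⟨by norm_num, by norm_num, by norm_num, by norm_num⟩
    | succ k ih =>
      rw [hsucc]
      exact (FInv_step ih).1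
  have hdec : ∀ n, Z (n + 1) ≤ Z n - (4 * Y n - 1) * Z n / 16 := by
    intro n
    have := (FInv_step (hinv n)).2
    simpa [hZ, hY, hsucc n] using this
  have hxz_pos : ∀ n, 0 ≤ (4 * Y n - 1) * Z n := by
    intro n
    obtain ⟨h1, h2, h3, h4⟩ := hinv n
    have : (0:ℝ) ≤ 4 * Y n - 1 := by
      simp only [hY]; linarith
    exact mul_nonneg this (le_of_lt h3)
  have hZpos : ∀ n, 0 < Z n := fun n => (hinv n).2.2.1
  have hanti : Antitone Z := by
    apply antitone_nat_of_succ_le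
    intro n
    have := hdec n
    have := hxz_pos n
    linarith
  have hbdd : BddBelow (Set.range Z) := by
    refine ⟨0, ?_⟩
    rintro x ⟨n, rfl⟩
    exact (hZpos n).le
  have hL : Tendsto Z atTop (nhds (⨅ n, Z n)) :=
    tendsto_atTop_ciInf hanti hbdd
  set L : ℝ := ⨅ n, Z n with hLdef
  have hL0 : 0 ≤ L := le_ciInf fun n => (hZpos n).le
  have hLle : ∀ n, L ≤ Z n := fun n => ciInf_le hbdd n
  have hshift : Tendsto (fun n => Z (n + 1)) atTop (nhds L) :=
    hL.comp (tendsto_add_atTop_nat 1)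
  have hdiff : Tendsto (fun n => Z n - Z (n + 1)) atTop (nhds 0) := by
    have := hL.sub hshift
    simpa using this
  have hxz : Tendsto (fun n => (4 * Y n - 1) * Z n) atTop (nhds 0) := by
    apply squeeze_zero hxz_pos (fun n => ?_) (by simpa using hdiff.const_mul (16:ℝ))
    have := hdec n
    linarith
  have hLzero : L = 0 := by
    by_contra hne
    have hLpos : 0 < L := lt_of_le_of_ne hL0 (Ne.symm hne)
    -- then 4Y-1 → 0
    have hx0 : Tendsto (fun n => 4 * Y n - 1) atTop (nhds 0) := by
      apply squeeze_zero (fun n => ?_) (fun n => ?_)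
        (by simpa using hxz.div_const L)
      · obtain ⟨h1, _, _, _⟩ := hinv n
        simp only [hY]; linarith
      · rw [le_div_iff₀ hLpos]
        have h1 : (0:ℝ) ≤ 4 * Y n - 1 := by
          obtain ⟨ha, _, _, _⟩ := hinv n
          simp only [hY]; linarith
        have := hLle n
        nlinarith
    have hy14 : Tendsto Y atTop (nhds (1/4)) := by
      have h := (hx0.add_const (1:ℝ)).div_const (4:ℝ)
      have heq : (fun n => (4 * Y n - 1 + 1) / 4) = Y := by
        funext n; ring
      rw [heq] at h
      have h0 : ((0:ℝ) + 1) / 4 = 1/4 := by norm_num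
      rwa [h0] at h
    -- Z n = Y (n+1) + Y n - 1/2
    have hrel : ∀ n, Z n = Y (n + 1) + Y n - 1/2 := by
      intro n
      have : Y (n + 1) = 1/2 - Y n + Z n := by
        simp only [hY, hsucc n]
        rfl
      linarith
    have hZ0 : Tendsto Z atTop (nhds 0) := by
      have h1 : Tendsto (fun n => Y (n + 1)) atTop (nhds (1/4)) :=
        hy14.comp (tendsto_add_atTop_nat 1)
      have h2 := (h1.add hy14).sub_const ((1:ℝ)/2)
      have heq : (fun n => Y (n + 1) + Y n - 1/2) = Z := by
        funext n; rw [hrel n]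
      rw [heq] at h2
      have h0 : ((1:ℝ)/4 + 1/4) - 1/2 = 0 := by norm_num
      rwa [h0] at h2
    have : L = 0 := tendsto_nhds_unique hL hZ0
    exact hne this
  have hZ0 : Tendsto Z atTop (nhds 0) := hLzero ▸ hL
  have hY14 : Tendsto Y atTop (nhds (1/4)) := by
    have hupper : Tendsto (fun n => Z n + 1/4) atTop (nhds (0 + 1/4)) :=
      hZ0.add_const ((1:ℝ)/4)
    rw [zero_add] at hupper
    exact tendsto_of_tendsto_of_tendsto_of_le_of_le
      (tendsto_const_nhds : Tendsto (fun _ : ℕ => (1/4:ℝ)) atTop (nhds (1/4)))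
      hupper (fun n => (hinv n).1.le) (fun n => (hinv n).2.1.le)
  have hoeq : o = fun n => (Y n, Z n) := by
    funext n
    exact Prod.mk.eta.symm
  rw [hoeq]
  exact hY14.prodMk_nhds hZ0
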